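/- (Theorem 3.1, joint survival function in the Gumbel model) For all s, t ≥ 0, the joint survival function of (τ_1, τ_2) satisfies P(τ_1 > s, τ_2 > t) = E[exp(−A^1_s − A^2_t − δ·A^1_s·A^2_t − A^3_{max(s,t)})]. -/
import Mathlib


open MeasureTheory ProbabilityTheory Filter Set


theorem stmt11_integrable_bdd {α : Type*} {mα : MeasurableSpace α} (μ : Measure α)
    [IsFiniteMeasure μ] {f : α → ℝ} (hmeas : StronglyMeasurable f) {C : ℝ}
    (h : ∀ᵐ x ∂μ, |f x| ≤ C) : Integrable f μ :=
  Integrable.mono' (integrable_const C) hmeas.aestronglyMeasurable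
    (h.mono fun x hx => by simpa using hx)

theorem stmt11_auxA {Ω : Type*} (m : MeasurableSpace Ω) [m0 : MeasurableSpace Ω]
    (P : Measure Ω) [IsProbabilityMeasure P] (hm : m ≤ m0) (u : ℝ) (c : ℝ) (hc : 0 ≤ c)
    (f : Ω × ℝ → ℝ) (hf : Measurable f)
    (hf0 : ∀ z, 0 ≤ f z) (hfc : ∀ z, f z ≤ c)
    (hslice : ∀ r ∈ Set.Ioc (0:ℝ) u, Measurable[m] fun ω => f (ω, r)) :
    ∃ g' : Ω → ℝ, Measurable[m] g' ∧
      (fun ω => ∫ r in Set.Ioc (0:ℝ) u, f (ω, r)) =ᵐ[P] g' := by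
  set ν : Measure ℝ := volume.restrict (Set.Ioc (0:ℝ) u) with hν
  haveI hνfin : IsFiniteMeasure ν := by
    constructor
    rw [hν, Measure.restrict_apply_univ]
    exact measure_Ioc_lt_top
  set g : Ω → ℝ := fun ω => ∫ r, f (ω, r) ∂ν with hg
  have hgsm : StronglyMeasurable g := hf.stronglyMeasurable.integral_prod_right'
  set C : ℝ := c * (ν Set.univ).toReal with hC
  have hC0 : 0 ≤ C := mul_nonneg hc ENNReal.toReal_nonneg
  have hgbdd : ∀ ω, |g ω| ≤ C := by
    intro ω
    rw [← Real.norm_eq_abs]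
    exact norm_integral_le_of_norm_le_const (Eventually.of_forall fun r => by
      rw [Real.norm_eq_abs, abs_of_nonneg (hf0 _)]; exact hfc _)
  have hgint : Integrable g P := stmt11_integrable_bdd P hgsm
    (Eventually.of_forall hgbdd)
  haveI : SigmaFinite (P.trim hm) := (isFiniteMeasure_trim hm).toSigmaFinite
  set h : Ω → ℝ := P[g|m] with hh
  have hhsm : StronglyMeasurable[m] h := stronglyMeasurable_condExp
  have hhbdd : ∀ᵐ ω ∂P, |h ω| ≤ C := by
    have := ae_bdd_condExp_of_ae_bdd (μ := P) (m := m) (R := C.toNNReal) (f := g)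
      (Eventually.of_forall fun ω => by
        rw [Real.coe_toNNReal _ hC0]; exact hgbdd ω)
    filter_upwards [this] with ω hω
    rwa [Real.coe_toNNReal _ hC0] at hω
  set h' : Ω → ℝ := fun ω => max (-C) (min (h ω) C) with hh'
  have hh'm : Measurable[m] h' := by
    have : Measurable[m] h := hhsm.measurable
    exact Measurable.max measurable_const (this.min measurable_const)
  have hh'sm : StronglyMeasurable[m] h' := hh'm.stronglyMeasurable
  have hh'bdd : ∀ ω, |h' ω| ≤ C := by
    intro ω
    rw [abs_le]
    constructor
    · exact le_max_left _ _
    · exact max_le (by linarith) (min_le_right _ _)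
  have hh'ae : h' =ᵐ[P] h := by
    filter_upwards [hhbdd] with ω hω
    rw [abs_le] at hω
    simp [hh', min_eq_left hω.2, max_eq_right, hω.1]
  -- key identity for slices
  have key : ∀ r ∈ Set.Ioc (0:ℝ) u,
      ∫ ω, f (ω, r) * h' ω ∂P = ∫ ω, f (ω, r) * g ω ∂P := by
    intro r hr
    have hfr : Measurable fun ω => f (ω, r) := hf.comp (measurable_id.prodMk measurable_const)
    have hfrm : StronglyMeasurable[m] (fun ω => f (ω, r)) :=
      (hslice r hr).stronglyMeasurable
    have hint : Integrable (fun ω => f (ω, r) * g ω) P := by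
      refine stmt11_integrable_bdd P (hfr.stronglyMeasurable.mul hgsm)
        (C := c * C) (Eventually.of_forall fun ω => ?_)
      rw [abs_mul]
      exact mul_le_mul (by rw [abs_of_nonneg (hf0 _)]; exact hfc _) (hgbdd ω)
        (abs_nonneg _) hc
    have hpull := condExp_mul_of_stronglyMeasurable_left (μ := P) hfrm hint hgint
    calc ∫ ω, f (ω, r) * h' ω ∂P = ∫ ω, f (ω, r) * h ω ∂P := by
            refine integral_congr_ae ?_
            filter_upwards [hh'ae] with ω hω; rw [hω]
      _ = ∫ ω, (P[(fun ω => f (ω, r)) * g|m]) ω ∂P := by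
            refine integral_congr_ae ?_
            filter_upwards [hpull] with ω hω
            exact hω.symm
      _ = ∫ ω, f (ω, r) * g ω ∂P := integral_condExp hm
  -- Fubini identity
  have fub : ∀ k : Ω → ℝ, StronglyMeasurable k → (∀ ω, |k ω| ≤ C) →
      ∫ ω, g ω * k ω ∂P = ∫ r, (∫ ω, f (ω, r) * k ω ∂P) ∂ν := by
    intro k hksm hkbdd
    have hjm : StronglyMeasurable (Function.uncurry fun (ω : Ω) (r : ℝ) => f (ω, r) * k ω) := by
      have : Function.uncurry (fun (ω : Ω) (r : ℝ) => f (ω, r) * k ω)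
          = fun z : Ω × ℝ => f z * k z.1 := by
        ext z; rfl
      rw [this]
      exact hf.stronglyMeasurable.mul (hksm.comp_measurable measurable_fst)
    have hji : Integrable (Function.uncurry fun (ω : Ω) (r : ℝ) => f (ω, r) * k ω) (P.prod ν) := by
      refine stmt11_integrable_bdd _ hjm (C := c * C)
        (Eventually.of_forall fun z => ?_)
      rw [Function.uncurry, abs_mul]
      exact mul_le_mul (by rw [abs_of_nonneg (hf0 _)]; exact hfc _) (hkbdd _)
        (abs_nonneg _) hc
    have := integral_integral_swap hji
    calc ∫ ω, g ω * k ω ∂P = ∫ ω, ∫ r, f (ω, r) * k ω ∂ν ∂P := by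
          refine integral_congr_ae (Eventually.of_forall fun ω => ?_)
          rw [hg]
          exact (integral_mul_const (k ω) _).symm
      _ = ∫ r, ∫ ω, f (ω, r) * k ω ∂P ∂ν := this
  have eq1 : ∫ ω, g ω * h' ω ∂P = ∫ ω, g ω * g ω ∂P := by
    rw [fub h' (hh'sm.mono hm) hh'bdd, fub g hgsm hgbdd]
    refine integral_congr_ae ?_
    rw [hν]
    refine (ae_restrict_iff' measurableSet_Ioc).2 (Eventually.of_forall fun r hr => key r hr)
  have eq2 : ∫ ω, h' ω * h' ω ∂P = ∫ ω, g ω * g ω ∂P := by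
    have hint : Integrable (fun ω => h' ω * g ω) P := by
      refine stmt11_integrable_bdd P ((hh'sm.mono hm).mul hgsm) (C := C * C) (Eventually.of_forall fun ω => ?_)
      rw [abs_mul]
      exact mul_le_mul (hh'bdd ω) (hgbdd ω) (abs_nonneg _) hC0
    have hpull := condExp_mul_of_stronglyMeasurable_left (μ := P) hh'sm hint hgint
    calc ∫ ω, h' ω * h' ω ∂P = ∫ ω, h' ω * h ω ∂P := by
          refine integral_congr_ae ?_
          filter_upwards [hh'ae] with ω hω; rw [hω]
      _ = ∫ ω, (P[h' * g|m]) ω ∂P := by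
          refine integral_congr_ae ?_
          filter_upwards [hpull] with ω hω
          exact hω.symm
      _ = ∫ ω, h' ω * g ω ∂P := integral_condExp hm
      _ = ∫ ω, g ω * h' ω ∂P := by simp_rw [mul_comm]
      _ = ∫ ω, g ω * g ω ∂P := eq1
  -- conclude
  have hdiffint : Integrable (fun ω => (g ω - h' ω) ^ 2) P := by
    refine stmt11_integrable_bdd P ?_ (C := (2*C)^2) (Eventually.of_forall fun ω => ?_)
    · exact (hgsm.sub (hh'sm.mono hm)).pow 2
    · rw [abs_of_nonneg (sq_nonneg _)]
      have h1 : |g ω - h' ω| ≤ 2 * C := by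
        rw [sub_eq_add_neg]
        calc |g ω + -h' ω| ≤ |g ω| + |(-h' ω)| := abs_add_le _ _
          _ = |g ω| + |h' ω| := by rw [abs_neg]
          _ ≤ C + C := add_le_add (hgbdd ω) (hh'bdd ω)
          _ = 2 * C := by ring
      calc (g ω - h' ω) ^ 2 = |g ω - h' ω| ^ 2 := (sq_abs _).symm
        _ ≤ (2*C)^2 := pow_le_pow_left₀ (abs_nonneg _) h1 2
  have hintgg : Integrable (fun ω => g ω * g ω) P :=
    stmt11_integrable_bdd P (hgsm.mul hgsm) (C := C * C)
      (Eventually.of_forall fun ω => by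
        rw [abs_mul]; exact mul_le_mul (hgbdd ω) (hgbdd ω) (abs_nonneg _) hC0)
  have hintgh : Integrable (fun ω => g ω * h' ω) P :=
    stmt11_integrable_bdd P (hgsm.mul (hh'sm.mono hm)) (C := C * C)
      (Eventually.of_forall fun ω => by
        rw [abs_mul]; exact mul_le_mul (hgbdd ω) (hh'bdd ω) (abs_nonneg _) hC0)
  have hinthh : Integrable (fun ω => h' ω * h' ω) P :=
    stmt11_integrable_bdd P ((hh'sm.mono hm).mul (hh'sm.mono hm))
      (C := C * C) (Eventually.of_forall fun ω => by
        rw [abs_mul]; exact mul_le_mul (hh'bdd ω) (hh'bdd ω) (abs_nonneg _) hC0)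
  have hzero : ∫ ω, (g ω - h' ω) ^ 2 ∂P = 0 := by
    have expand : (fun ω => (g ω - h' ω) ^ 2)
        = fun ω => (g ω * g ω - 2 * (g ω * h' ω)) + h' ω * h' ω := by
      ext ω; ring
    rw [expand, integral_add (by exact (hintgg.sub (hintgh.const_mul 2))) hinthh,
      integral_sub hintgg (hintgh.const_mul 2), MeasureTheory.integral_const_mul, eq1, eq2]
    ring
  have : (fun ω => (g ω - h' ω) ^ 2) =ᵐ[P] 0 :=
    (integral_eq_zero_iff_of_nonneg_ae (Eventually.of_forall fun ω => sq_nonneg _)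
      hdiffint).1 hzero
  refine ⟨h', hh'm, ?_⟩
  filter_upwards [this] with ω hω
  have : (g ω - h' ω) ^ 2 = 0 := hω
  have := sq_eq_zero_iff.1 this
  linarith [this]

theorem stmt11_auxB {Ω : Type*} (m : MeasurableSpace Ω) [m0 : MeasurableSpace Ω]
    (P : Measure Ω) [IsProbabilityMeasure P] (hm : m ≤ m0) (u : ℝ)
    (f : Ω × ℝ → ℝ) (hf : Measurable f) (hf0 : ∀ z, 0 ≤ f z)
    (hslice : ∀ r ∈ Set.Ioc (0:ℝ) u, Measurable[m] fun ω => f (ω, r)) :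
    ∃ B : Ω → ℝ, Measurable[m] B ∧ (∀ ω, 0 ≤ B ω) ∧
      ∀ᵐ ω ∂P, IntegrableOn (fun r => f (ω, r)) (Set.Ioc (0:ℝ) u) volume →
        B ω = ∫ r in Set.Ioc (0:ℝ) u, f (ω, r) := by
  set ν : Measure ℝ := volume.restrict (Set.Ioc (0:ℝ) u) with hν
  haveI hνfin : IsFiniteMeasure ν := by
    constructor
    rw [hν, Measure.restrict_apply_univ]
    exact measure_Ioc_lt_top
  have H : ∀ n : ℕ, ∃ g' : Ω → ℝ, Measurable[m] g' ∧
      (fun ω => ∫ r in Set.Ioc (0:ℝ) u, min (f (ω, r)) n) =ᵐ[P] g' := by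
    intro n
    refine stmt11_auxA m P hm u n (Nat.cast_nonneg n) (fun z => min (f z) n)
      (hf.min measurable_const) (fun z => le_min (hf0 z) (Nat.cast_nonneg n))
      (fun z => min_le_right _ _) (fun r hr => (hslice r hr).min measurable_const)
  choose g' hg'meas hg'ae using H
  refine ⟨fun ω => (⨆ n : ℕ, ENNReal.ofReal (g' n ω)).toReal, ?_, fun ω => ENNReal.toReal_nonneg, ?_⟩
  · exact Measurable.ennreal_toReal (Measurable.iSup fun n => (hg'meas n).ennreal_ofReal)
  · have := ae_all_iff.2 hg'ae
    filter_upwards [this] with ω hω hint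
    have hfmeas : ∀ n : ℕ, StronglyMeasurable fun r => min (f (ω, r)) (n : ℝ) :=
      fun n => ((hf.comp (measurable_const.prodMk measurable_id)).min
        measurable_const).stronglyMeasurable
    have hintn : ∀ n : ℕ, Integrable (fun r => min (f (ω, r)) (n : ℝ)) ν := by
      intro n
      refine stmt11_integrable_bdd ν (hfmeas n) (C := n) (Eventually.of_forall fun r => ?_)
      rw [abs_of_nonneg (le_min (hf0 _) (Nat.cast_nonneg n))]
      exact min_le_right _ _
    have hle : ∀ n : ℕ, (∫ r, min (f (ω, r)) (n : ℝ) ∂ν) ≤ ∫ r, f (ω, r) ∂ν := by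
      intro n
      exact integral_mono (hintn n) hint (fun r => min_le_left _ _)
    have htend : Tendsto (fun n : ℕ => ∫ r, min (f (ω, r)) (n : ℝ) ∂ν) atTop
        (nhds (∫ r, f (ω, r) ∂ν)) := by
      refine tendsto_integral_of_dominated_convergence (fun r => f (ω, r))
        (fun n => (hfmeas n).aestronglyMeasurable) hint ?_ ?_
      · intro n
        refine Eventually.of_forall fun r => ?_
        rw [Real.norm_eq_abs, abs_of_nonneg (le_min (hf0 _) (Nat.cast_nonneg n))]
        exact min_le_left _ _
      · refine Eventually.of_forall fun r => ?_
        refine tendsto_atTop_of_eventually_const (i₀ := ⌈f (ω, r)⌉₊) fun n hn => ?_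
        exact min_eq_left ((Nat.le_ceil _).trans (Nat.cast_le.2 hn))
    have hsup : (⨆ n : ℕ, ENNReal.ofReal (g' n ω)) = ENNReal.ofReal (∫ r, f (ω, r) ∂ν) := by
      have hrw : ∀ n : ℕ, ENNReal.ofReal (g' n ω)
          = ENNReal.ofReal (∫ r, min (f (ω, r)) (n : ℝ) ∂ν) := by
        intro n; rw [hω n]
      simp_rw [hrw]
      refine le_antisymm (iSup_le fun n => ENNReal.ofReal_le_ofReal (hle n)) ?_
      refine le_of_tendsto' ((ENNReal.continuous_ofReal.tendsto _).comp htend) fun n => ?_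
      exact le_iSup (fun n : ℕ => ENNReal.ofReal (∫ r, min (f (ω, r)) (n : ℝ) ∂ν)) n
    rw [hsup, ENNReal.toReal_ofReal]
    exact integral_nonneg fun r => hf0 _


theorem stmt11_auxD (F : ℝ → ℝ) (f : ℝ → ℝ)
    (hF : ∀ v, F v = ∫ r in (0:ℝ)..v, f r)
    (hmono : StrictMonoOn F (Set.Ici (0:ℝ))) (u : ℝ) (hu : 0 ≤ u) :
    IntervalIntegrable f volume 0 u := by
  rcases eq_or_lt_of_le hu with h0 | h0
  · rw [← h0]
  · by_contra hni
    have h1 : F u = 0 := by rw [hF u]; exact intervalIntegral.integral_undef hni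
    have h2 : F 0 = 0 := by rw [hF 0]; exact intervalIntegral.integral_same
    have := hmono (Set.self_mem_Ici) (le_of_lt h0 : (0:ℝ) ≤ u) h0
    rw [h1, h2] at this
    exact lt_irrefl 0 this

theorem stmt11_auxC (F : ℝ → ℝ) (f : ℝ → ℝ)
    (hF : ∀ v, F v = ∫ r in (0:ℝ)..v, f r)
    (hmono : StrictMonoOn F (Set.Ici (0:ℝ))) (htop : Tendsto F atTop atTop)
    (Z : ℝ) (u : ℝ) (hu : 0 ≤ u) :
    u < sInf {x : ℝ | 0 ≤ x ∧ Z ≤ F x} ↔ F u < Z := by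
  have hii : ∀ v : ℝ, 0 ≤ v → IntervalIntegrable f volume 0 v :=
    fun v hv => stmt11_auxD F f hF hmono v hv
  have hcont : ∀ N : ℝ, 0 ≤ N → ContinuousOn F (Set.Icc 0 N) := by
    intro N hN
    have hInt : IntegrableOn f (Set.Icc 0 N) volume := by
      rw [integrableOn_Icc_iff_integrableOn_Ioc]
      exact (intervalIntegrable_iff_integrableOn_Ioc_of_le hN).1 (hii N hN)
    have := intervalIntegral.continuousOn_primitive (f := f) (μ := volume) (a := 0) (b := N) hInt
    refine this.congr fun v hv => ?_
    rw [hF v, intervalIntegral.integral_of_le hv.1]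
  set S := {x : ℝ | 0 ≤ x ∧ Z ≤ F x} with hS
  have hne : S.Nonempty := by
    have h1 : ∀ᶠ x in atTop, Z ≤ F x := htop.eventually_ge_atTop Z
    have h2 : ∀ᶠ x in atTop, (0:ℝ) ≤ x := eventually_ge_atTop 0
    obtain ⟨x, hx1, hx2⟩ := (h2.and h1).exists
    exact ⟨x, hx1, hx2⟩
  have hbdd : BddBelow S := ⟨0, fun x hx => hx.1⟩
  set σ := sInf S with hσ
  have hσ0 : 0 ≤ σ := le_csInf hne fun x hx => hx.1
  have hZσ : Z ≤ F σ := by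
    by_contra hlt
    push_neg at hlt
    set ε := Z - F σ with hε
    have hε0 : 0 < ε := by simp [hε]; linarith
    have hcw : ContinuousWithinAt F (Set.Icc 0 (σ + 1)) σ :=
      (hcont (σ + 1) (by linarith)).continuousWithinAt ⟨hσ0, by linarith⟩
    rw [Metric.continuousWithinAt_iff] at hcw
    obtain ⟨δ, hδ0, hδ⟩ := hcw ε hε0
    obtain ⟨x, hxS, hxlt⟩ := Real.lt_sInf_add_pos hne (lt_min hδ0 one_pos)
    have hσx : σ ≤ x := csInf_le hbdd hxS
    have hx1 : x ∈ Set.Icc 0 (σ + 1) := ⟨hxS.1, by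
      have := min_le_right δ 1; linarith⟩
    have hxd : dist x σ < δ := by
      rw [Real.dist_eq, abs_of_nonneg (by linarith)]
      have := min_le_left δ 1; linarith
    have := hδ hx1 hxd
    rw [Real.dist_eq] at this
    have : F x < Z := by
      have h3 := abs_lt.1 this
      linarith [h3.2]
    linarith [hxS.2]
  constructor
  · intro huσ
    by_contra hc
    push_neg at hc
    exact absurd (csInf_le hbdd ⟨hu, hc⟩) (not_le.2 huσ)
  · intro hFu
    by_contra hc
    push_neg at hc
    have : F σ ≤ F u := hmono.monotoneOn (Set.mem_Ici.2 hσ0) (Set.mem_Ici.2 hu) hc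
    linarith

/-- The σ-algebra generated by the process `X` on nonnegative times. -/
def stmt11G {Ω : Type*} {d : ℕ} (X : ℝ → Ω → (Fin d → ℝ)) : MeasurableSpace Ω :=
  ⨆ t ∈ Set.Ici (0 : ℝ), MeasurableSpace.comap (X t) inferInstance

theorem stmt11
    {Ω : Type*} [MeasurableSpace Ω] (P : Measure Ω) [IsProbabilityMeasure P]
    {d : ℕ} (X : ℝ → Ω → (Fin d → ℝ))
    (hX : Measurable (Function.uncurry X))
    (δ : ℝ) (hδ0 : 0 ≤ δ) (hδ1 : δ ≤ 1)
    (Z : Fin 3 → Ω → ℝ) (hZmeas : ∀ i, Measurable (Z i))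
    (hZ12 : ∀ s t : ℝ, 0 ≤ s → 0 ≤ t →
      P {ω | s < Z 0 ω ∧ t < Z 1 ω} = ENNReal.ofReal (Real.exp (-s - t - δ * s * t)))
    (hZ3 : ∀ s : ℝ, 0 ≤ s →
      P {ω | s < Z 2 ω} = ENNReal.ofReal (Real.exp (-s)))
    (hindep : iIndep
      ![MeasurableSpace.comap (fun ω => (Z 0 ω, Z 1 ω)) inferInstance,
        MeasurableSpace.comap (Z 2) inferInstance,
        ⨆ t ∈ Set.Ici (0 : ℝ), MeasurableSpace.comap (X t) inferInstance] P)
    (α : Fin 3 → (Fin d → ℝ) → ℝ)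
    (hαcont : ∀ i, Continuous (α i)) (hαpos : ∀ i x, 0 ≤ α i x)
    (A : Fin 3 → ℝ → Ω → ℝ)
    (hA : ∀ i s ω, A i s ω = ∫ r in (0 : ℝ)..s, α i (X r ω))
    (hAmono : ∀ᵐ ω ∂P, ∀ i, StrictMonoOn (fun s => A i s ω) (Set.Ici (0 : ℝ)))
    (hAtop : ∀ᵐ ω ∂P, ∀ i, Filter.Tendsto (fun s => A i s ω) Filter.atTop Filter.atTop)
    (η : Fin 3 → Ω → ℝ)
    (hη : ∀ i ω, η i ω = sInf {s : ℝ | 0 ≤ s ∧ Z i ω ≤ A i s ω})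
    (τ₁ τ₂ : Ω → ℝ)
    (hτ₁ : ∀ ω, τ₁ ω = min (η 0 ω) (η 2 ω))
    (hτ₂ : ∀ ω, τ₂ ω = min (η 1 ω) (η 2 ω))
    (s t : ℝ) (hs : 0 ≤ s) (ht : 0 ≤ t) :
    (P {ω | s < τ₁ ω ∧ t < τ₂ ω}).toReal
      = ∫ ω, Real.exp (-(A 0 s ω) - A 1 t ω - δ * A 0 s ω * A 1 t ω
          - A 2 (max s t) ω) ∂P := by
  classical
  have hm : stmt11G X ≤ ‹MeasurableSpace Ω› := by
    refine iSup_le fun r => iSup_le fun hr => ?_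
    exact measurable_iff_comap_le.1 hX.of_uncurry_left
  have hXr : ∀ r : ℝ, 0 ≤ r → Measurable[stmt11G X] (X r) := by
    intro r hr
    refine measurable_iff_comap_le.2 ?_
    exact le_biSup (fun u => MeasurableSpace.comap (X u) inferInstance) hr
  -- the σ(X)-measurable versions of the additive functionals
  have hBex : ∀ (i : Fin 3) (u : ℝ), 0 ≤ u → ∃ B : Ω → ℝ, Measurable[stmt11G X] B ∧
      (∀ ω, 0 ≤ B ω) ∧ B =ᵐ[P] fun ω => A i u ω := by
    intro i u hu
    obtain ⟨B, hBm, hB0, hBae⟩ := stmt11_auxB (stmt11G X) P hm u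
      (fun z => α i (X z.2 z.1))
      ((hαcont i).measurable.comp (hX.comp measurable_swap))
      (fun z => hαpos i _)
      (fun r hr => (hαcont i).measurable.comp (hXr r (le_of_lt hr.1)))
    refine ⟨B, hBm, hB0, ?_⟩
    filter_upwards [hAmono, hBae] with ω hmono hB
    have hF : ∀ v, A i v ω = ∫ r in (0:ℝ)..v, α i (X r ω) := fun v => hA i v ω
    have hii := stmt11_auxD (fun v => A i v ω) (fun r => α i (X r ω)) hF (hmono i) u hu
    have hio : IntegrableOn (fun r => α i (X r ω)) (Set.Ioc 0 u) volume :=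
      (intervalIntegrable_iff_integrableOn_Ioc_of_le hu).1 hii
    rw [hB hio, hA i u ω, intervalIntegral.integral_of_le hu]
  obtain ⟨B0, hB0m, hB0nn, hB0ae⟩ := hBex 0 s hs
  obtain ⟨B1, hB1m, hB1nn, hB1ae⟩ := hBex 1 t ht
  obtain ⟨B2, hB2m, hB2nn, hB2ae⟩ := hBex 2 (max s t) (le_max_of_le_left hs)
  -- a.e. description of the event
  have hEweq : {ω | s < τ₁ ω ∧ t < τ₂ ω} =ᵐ[P]
      {ω | B0 ω < Z 0 ω ∧ B1 ω < Z 1 ω ∧ B2 ω < Z 2 ω} := by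
    rw [Filter.eventuallyEq_set]
    filter_upwards [hAmono, hAtop, hB0ae, hB1ae, hB2ae] with ω hmono htop h0 h1 h2
    have hiff : ∀ (i : Fin 3) (u : ℝ), 0 ≤ u → (u < η i ω ↔ A i u ω < Z i ω) := by
      intro i u hu
      rw [hη i ω]
      exact stmt11_auxC (fun v => A i v ω) (fun r => α i (X r ω)) (fun v => hA i v ω)
        (hmono i) (htop i) (Z i ω) u hu
    have i0 := hiff 0 s hs
    have i1 := hiff 1 t ht
    have i2s := hiff 2 s hs
    have i2t := hiff 2 t ht
    have hmax : A 2 (max s t) ω < Z 2 ω ↔ (A 2 s ω < Z 2 ω ∧ A 2 t ω < Z 2 ω) := by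
      rcases le_total s t with h | h
      · rw [max_eq_right h]
        constructor
        · intro hlt
          exact ⟨lt_of_le_of_lt ((hmono 2).monotoneOn (Set.mem_Ici.2 hs)
            (Set.mem_Ici.2 (hs.trans h)) h) hlt, hlt⟩
        · exact fun h2 => h2.2
      · rw [max_eq_left h]
        constructor
        · intro hlt
          exact ⟨hlt, lt_of_le_of_lt ((hmono 2).monotoneOn (Set.mem_Ici.2 ht)
            (Set.mem_Ici.2 (ht.trans h)) h) hlt⟩
        · exact fun h2 => h2.1
    constructor
    · rintro ⟨hw1, hw2⟩
      rw [hτ₁ ω, lt_min_iff] at hw1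
      rw [hτ₂ ω, lt_min_iff] at hw2
      refine ⟨?_, ?_, ?_⟩
      · rw [h0]; exact i0.1 hw1.1
      · rw [h1]; exact i1.1 hw2.1
      · rw [h2]; exact hmax.2 ⟨i2s.1 hw1.2, i2t.1 hw2.2⟩
    · rintro ⟨hv1, hv2, hv3⟩
      rw [h0] at hv1; rw [h1] at hv2; rw [h2] at hv3
      have h3 := hmax.1 hv3
      constructor
      · rw [hτ₁ ω, lt_min_iff]; exact ⟨i0.2 hv1, i2s.2 h3.1⟩
      · rw [hτ₂ ω, lt_min_iff]; exact ⟨i1.2 hv2, i2t.2 h3.2⟩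
  -- survival function of the Z triple
  have hindep' : iIndep
      ![MeasurableSpace.comap (fun ω => (Z 0 ω, Z 1 ω)) inferInstance,
        MeasurableSpace.comap (Z 2) inferInstance, stmt11G X] P := hindep
  have hsurv : ∀ a b c : ℝ, 0 ≤ a → 0 ≤ b → 0 ≤ c →
      P {ω | a < Z 0 ω ∧ b < Z 1 ω ∧ c < Z 2 ω}
        = ENNReal.ofReal (Real.exp (-a - b - δ * a * b - c)) := by
    intro a b c ha hb hc
    have hi : Indep (MeasurableSpace.comap (fun ω => (Z 0 ω, Z 1 ω)) inferInstance)
        (MeasurableSpace.comap (Z 2) inferInstance) P :=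
      hindep'.indep (i := 0) (j := 1) (by decide)
    have hsplit : {ω | a < Z 0 ω ∧ b < Z 1 ω ∧ c < Z 2 ω}
        = {ω | a < Z 0 ω ∧ b < Z 1 ω} ∩ {ω | c < Z 2 ω} := by
      ext ω; simp only [Set.mem_setOf_eq, Set.mem_inter_iff]; tauto
    have hS : MeasurableSet[MeasurableSpace.comap (fun ω => (Z 0 ω, Z 1 ω))
        inferInstance] {ω | a < Z 0 ω ∧ b < Z 1 ω} :=
      ⟨Set.Ioi a ×ˢ Set.Ioi b, (measurableSet_Ioi.prod measurableSet_Ioi), rfl⟩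
    have hT : MeasurableSet[MeasurableSpace.comap (Z 2) inferInstance]
        {ω | c < Z 2 ω} := ⟨Set.Ioi c, measurableSet_Ioi, rfl⟩
    rw [hsplit, (Indep_iff _ _ _).1 hi _ _ hS hT, hZ12 a b ha hb, hZ3 c hc,
      ← ENNReal.ofReal_mul (Real.exp_nonneg _), ← Real.exp_add, ← sub_eq_add_neg]
  -- independence of the pair (V, W)
  set V : Ω → ℝ × ℝ × ℝ := fun ω => (B0 ω, B1 ω, B2 ω) with hV
  set W : Ω → ℝ × ℝ × ℝ := fun ω => (Z 0 ω, Z 1 ω, Z 2 ω) with hW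
  have hVG : Measurable[stmt11G X] V := Measurable.prodMk hB0m (Measurable.prodMk hB1m hB2m)
  have hVmeas : Measurable V := hVG.mono hm le_rfl
  have hWmeas : Measurable W :=
    (hZmeas 0).prodMk ((hZmeas 1).prodMk (hZmeas 2))
  have hVW : IndepFun V W P := by
    have h_le : ∀ n : Fin 3, (![MeasurableSpace.comap (fun ω => (Z 0 ω, Z 1 ω)) inferInstance,
        MeasurableSpace.comap (Z 2) inferInstance, stmt11G X] : Fin 3 → MeasurableSpace Ω) n
        ≤ ‹MeasurableSpace Ω› := by
      intro n
      fin_cases n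
      · exact measurable_iff_comap_le.1 ((hZmeas 0).prodMk (hZmeas 1))
      · exact measurable_iff_comap_le.1 (hZmeas 2)
      · exact hm
    have hbi := indep_biSup_compl h_le hindep' ({2} : Set (Fin 3))
    have hcompV : MeasurableSpace.comap V inferInstance
        ≤ ⨆ n ∈ ({2} : Set (Fin 3)),
          (![MeasurableSpace.comap (fun ω => (Z 0 ω, Z 1 ω)) inferInstance,
            MeasurableSpace.comap (Z 2) inferInstance, stmt11G X]) n := by
      refine le_trans (measurable_iff_comap_le.1 hVG) ?_
      exact le_biSup (f := (![MeasurableSpace.comap (fun ω => (Z 0 ω, Z 1 ω)) inferInstance,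
        MeasurableSpace.comap (Z 2) inferInstance, stmt11G X] : Fin 3 → MeasurableSpace Ω))
        (Set.mem_singleton (2 : Fin 3))
    have hcompW : MeasurableSpace.comap W inferInstance
        ≤ ⨆ n ∈ (({2} : Set (Fin 3))ᶜ),
          (![MeasurableSpace.comap (fun ω => (Z 0 ω, Z 1 ω)) inferInstance,
            MeasurableSpace.comap (Z 2) inferInstance, stmt11G X]) n := by
      have h0mem : (0 : Fin 3) ∈ (({2} : Set (Fin 3))ᶜ) := by decide
      have h1mem : (1 : Fin 3) ∈ (({2} : Set (Fin 3))ᶜ) := by decide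
      have hp : Measurable[MeasurableSpace.comap (fun ω => (Z 0 ω, Z 1 ω)) inferInstance]
          (fun ω => (Z 0 ω, Z 1 ω)) := measurable_iff_comap_le.2 le_rfl
      have hq : Measurable[MeasurableSpace.comap (Z 2) inferInstance] (Z 2) :=
        measurable_iff_comap_le.2 le_rfl
      refine measurable_iff_comap_le.1 ?_
      refine Measurable.prodMk ?_ (Measurable.prodMk ?_ ?_)
      · exact (measurable_fst.comp hp).mono (le_biSup (f := (![MeasurableSpace.comap (fun ω => (Z 0 ω, Z 1 ω)) inferInstance,
          MeasurableSpace.comap (Z 2) inferInstance, stmt11G X] : Fin 3 → MeasurableSpace Ω)) h0mem) le_rfl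
      · exact (measurable_snd.comp hp).mono (le_biSup (f := (![MeasurableSpace.comap (fun ω => (Z 0 ω, Z 1 ω)) inferInstance,
          MeasurableSpace.comap (Z 2) inferInstance, stmt11G X] : Fin 3 → MeasurableSpace Ω)) h0mem) le_rfl
      · exact hq.mono (le_biSup (f := (![MeasurableSpace.comap (fun ω => (Z 0 ω, Z 1 ω)) inferInstance,
          MeasurableSpace.comap (Z 2) inferInstance, stmt11G X] : Fin 3 → MeasurableSpace Ω)) h1mem) le_rfl
    exact (IndepFun_iff_Indep V W P).2
      (indep_of_indep_of_le_right (indep_of_indep_of_le_left hbi hcompV) hcompW)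
  haveI hPV : IsProbabilityMeasure (P.map V) := Measure.isProbabilityMeasure_map hVmeas.aemeasurable
  haveI hPW : IsProbabilityMeasure (P.map W) := Measure.isProbabilityMeasure_map hWmeas.aemeasurable
  have hmapeq : P.map (fun ω => (V ω, W ω)) = (P.map V).prod (P.map W) :=
    (indepFun_iff_map_prod_eq_prod_map_map hVmeas.aemeasurable hWmeas.aemeasurable).1 hVW
  -- the strict-order region
  set U : Set ((ℝ × ℝ × ℝ) × (ℝ × ℝ × ℝ)) :=
    {p | p.1.1 < p.2.1 ∧ p.1.2.1 < p.2.2.1 ∧ p.1.2.2 < p.2.2.2} with hUdef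
  have hU : MeasurableSet U := by
    refine MeasurableSet.inter ?_ (MeasurableSet.inter ?_ ?_)
    · exact measurableSet_lt (measurable_fst.comp measurable_fst)
        (measurable_fst.comp measurable_snd)
    · exact measurableSet_lt ((measurable_fst.comp measurable_snd).comp measurable_fst)
        ((measurable_fst.comp measurable_snd).comp measurable_snd)
    · exact measurableSet_lt ((measurable_snd.comp measurable_snd).comp measurable_fst)
        ((measurable_snd.comp measurable_snd).comp measurable_snd)
  have hWslice : ∀ v : ℝ × ℝ × ℝ, MeasurableSet {w : ℝ × ℝ × ℝ |
      v.1 < w.1 ∧ v.2.1 < w.2.1 ∧ v.2.2 < w.2.2} := by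
    intro v
    refine MeasurableSet.inter ?_ (MeasurableSet.inter ?_ ?_)
    · exact measurableSet_lt measurable_const measurable_fst
    · exact measurableSet_lt measurable_const (measurable_fst.comp measurable_snd)
    · exact measurableSet_lt measurable_const (measurable_snd.comp measurable_snd)
  have hkey : P {ω | s < τ₁ ω ∧ t < τ₂ ω}
      = ∫⁻ ω, ENNReal.ofReal (Real.exp (-(B0 ω) - B1 ω - δ * B0 ω * B1 ω - B2 ω)) ∂P := by
    calc P {ω | s < τ₁ ω ∧ t < τ₂ ω}
        = P {ω | B0 ω < Z 0 ω ∧ B1 ω < Z 1 ω ∧ B2 ω < Z 2 ω} := measure_congr hEweq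
      _ = P.map (fun ω => (V ω, W ω)) U := by
          rw [Measure.map_apply (hVmeas.prodMk hWmeas) hU]
          rfl
      _ = ((P.map V).prod (P.map W)) U := by rw [hmapeq]
      _ = ∫⁻ v, (P.map W) (Prod.mk v ⁻¹' U) ∂(P.map V) := Measure.prod_apply hU
      _ = ∫⁻ ω, (P.map W) (Prod.mk (V ω) ⁻¹' U) ∂P :=
          lintegral_map (measurable_measure_prodMk_left hU) hVmeas
      _ = ∫⁻ ω, ENNReal.ofReal (Real.exp (-(B0 ω) - B1 ω - δ * B0 ω * B1 ω - B2 ω)) ∂P := by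
          refine lintegral_congr fun ω => ?_
          have hpre : Prod.mk (V ω) ⁻¹' U = {w : ℝ × ℝ × ℝ |
              B0 ω < w.1 ∧ B1 ω < w.2.1 ∧ B2 ω < w.2.2} := rfl
          rw [hpre, Measure.map_apply hWmeas (hWslice (V ω))]
          have hpre2 : W ⁻¹' {w : ℝ × ℝ × ℝ | B0 ω < w.1 ∧ B1 ω < w.2.1 ∧ B2 ω < w.2.2}
              = {ω' | B0 ω < Z 0 ω' ∧ B1 ω < Z 1 ω' ∧ B2 ω < Z 2 ω'} := rfl
          rw [hpre2, hsurv (B0 ω) (B1 ω) (B2 ω) (hB0nn ω) (hB1nn ω) (hB2nn ω)]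
  -- convert to a Bochner integral and substitute A back in
  have hexp_meas : Measurable fun ω =>
      Real.exp (-(B0 ω) - B1 ω - δ * B0 ω * B1 ω - B2 ω) := by
    have h0 : Measurable B0 := hB0m.mono hm le_rfl
    have h1 : Measurable B1 := hB1m.mono hm le_rfl
    have h2 : Measurable B2 := hB2m.mono hm le_rfl
    exact Real.measurable_exp.comp
      (((h0.neg.sub h1).sub ((h0.const_mul δ).mul h1)).sub h2)
  have hBint : ∫ ω, Real.exp (-(B0 ω) - B1 ω - δ * B0 ω * B1 ω - B2 ω) ∂P
      = (∫⁻ ω, ENNReal.ofReal (Real.exp (-(B0 ω) - B1 ω - δ * B0 ω * B1 ω - B2 ω)) ∂P).toReal := by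
    rw [integral_eq_lintegral_of_nonneg_ae
      (Eventually.of_forall fun ω => (Real.exp_pos _).le) hexp_meas.aestronglyMeasurable]
  rw [hkey, ← hBint]
  refine integral_congr_ae ?_
  filter_upwards [hB0ae, hB1ae, hB2ae] with ω e0 e1 e2
  rw [e0, e1, e2]
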